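/- arXiv:2101.03253 — 6 statements merged into one kernel-verified Lean document; each statement's English description precedes it below -/
import Mathlib

section
/- Let Θ ⊆ ℝ^{n_θ} be convex, θ ∈ Θ, and let θ̂: ℝ₊ → Θ be differentiable at t with θ̇̂(t) = [−λ_e K(t)ᵀ e_obs(t)]_{T_Θ(θ̂(t))}, where e_obs(t) = K(t)(θ̂(t) − θ) and λ_e(t) ≥ 0. Then d/dt ‖θ̂(t) − θ‖² ≤ −2 λ_e(t) ‖e_obs(t)‖² ≤ 0. -/
open scoped RealInnerProductSpace

/-- Tangent cone to a set `S` at `x`: closure of `{h (z - x) : z ∈ S, h > 0}`. -/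
def tanCone {n : ℕ} (S : Set (EuclideanSpace ℝ (Fin n))) (x : EuclideanSpace ℝ (Fin n)) :
    Set (EuclideanSpace ℝ (Fin n)) :=
  closure {y | ∃ z ∈ S, ∃ h : ℝ, 0 < h ∧ y = h • (z - x)}

/-- Normal cone to a set `S` at `x`. -/
def normalCone {n : ℕ} (S : Set (EuclideanSpace ℝ (Fin n))) (x : EuclideanSpace ℝ (Fin n)) :
    Set (EuclideanSpace ℝ (Fin n)) :=
  {v | ∀ w ∈ tanCone S x, ⟪v, w⟫ ≤ 0}

/-- `p` is the Euclidean projection of `v` onto `C`. -/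
def IsProjOn {n : ℕ} (C : Set (EuclideanSpace ℝ (Fin n))) (v p : EuclideanSpace ℝ (Fin n)) :
    Prop :=
  p ∈ C ∧ ∀ w ∈ C, ‖p - v‖ ≤ ‖w - v‖

lemma projVar {n : ℕ} {C : Set (EuclideanSpace ℝ (Fin n))} (hC : Convex ℝ C)
    {v p : EuclideanSpace ℝ (Fin n)} (h : IsProjOn C v p)
    {w : EuclideanSpace ℝ (Fin n)} (hw : w ∈ C) : ⟪v - p, w - p⟫ ≤ 0 := by
  have key : ∀ c : ℝ, 0 < c → c ≤ 1 → 0 ≤ 2 * ⟪p - v, w - p⟫ + c * ‖w - p‖ ^ 2 := by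
    intro c hc hc1
    have hq : p + c • (w - p) ∈ C := by
      have := hC h.1 hw (by linarith : (0:ℝ) ≤ 1 - c) hc.le (by ring)
      convert this using 1
      rw [smul_sub, sub_smul, one_smul]; abel
    have hle := h.2 _ hq
    have heq : p + c • (w - p) - v = (p - v) + c • (w - p) := by abel
    rw [heq] at hle
    have hsq : ‖p - v‖ ^ 2 ≤ ‖(p - v) + c • (w - p)‖ ^ 2 := by
      have := norm_nonneg (p - v)
      nlinarith
    rw [norm_add_sq_real, real_inner_smul_right, norm_smul] at hsq
    have : 0 ≤ 2 * (c * ⟪p - v, w - p⟫) + (‖c‖ * ‖w - p‖) ^ 2 := by linarith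
    rw [Real.norm_eq_abs, abs_of_pos hc] at this
    have h2 : 0 ≤ c * (2 * ⟪p - v, w - p⟫ + c * ‖w - p‖ ^ 2) := by nlinarith
    exact nonneg_of_mul_nonneg_right h2 hc
  have hnn : 0 ≤ ⟪p - v, w - p⟫ := by
    by_contra hneg
    push_neg at hneg
    set cc := ⟪p - v, w - p⟫ with hcc
    set B := ‖w - p‖ ^ 2 with hB
    have hBnn : 0 ≤ B := by positivity
    rcases eq_or_lt_of_le hBnn with hB0 | hBpos
    · have := key 1 one_pos le_rfl
      rw [← hB0] at this; linarith
    · have hθ := key (min 1 (-cc / B)) (lt_min one_pos (div_pos (by linarith) hBpos)) (min_le_left _ _)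
      have : min 1 (-cc / B) * B ≤ (-cc / B) * B :=
        mul_le_mul_of_nonneg_right (min_le_right _ _) hBnn
      rw [div_mul_cancel₀ _ (ne_of_gt hBpos)] at this
      linarith
  have : v - p = -(p - v) := by abel
  rw [this, inner_neg_left]
  linarith

/-- Along the projected-gradient estimation dynamics, the squared estimation error is
nonincreasing: its derivative is at most `-2 * lam * ‖e_obs‖ ^ 2 ≤ 0`. -/
theorem stmt_4 {nθ m : ℕ}
    (Θ : Set (EuclideanSpace ℝ (Fin nθ))) (hΘ : Convex ℝ Θ)
    (θ : EuclideanSpace ℝ (Fin nθ)) (hθ : θ ∈ Θ)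
    (θhat : ℝ → EuclideanSpace ℝ (Fin nθ)) (hmem : ∀ s, θhat s ∈ Θ)
    (K : EuclideanSpace ℝ (Fin nθ) →L[ℝ] EuclideanSpace ℝ (Fin m))
    (lam t : ℝ) (hlam : 0 ≤ lam)
    (d : EuclideanSpace ℝ (Fin nθ))
    (hd : IsProjOn (tanCone Θ (θhat t))
      ((-lam) • (ContinuousLinearMap.adjoint K) (K (θhat t - θ))) d)
    (hder : HasDerivAt θhat d t) :
    HasDerivAt (fun s => ‖θhat s - θ‖ ^ 2) (2 * ⟪θhat t - θ, d⟫) t ∧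
    2 * ⟪θhat t - θ, d⟫ ≤ -2 * lam * ‖K (θhat t - θ)‖ ^ 2 ∧
    -2 * lam * ‖K (θhat t - θ)‖ ^ 2 ≤ 0 := by
  set x := θhat t with hx
  set g : EuclideanSpace ℝ (Fin nθ) := θhat t - θ with hg
  set v : EuclideanSpace ℝ (Fin nθ) := (-lam) • (ContinuousLinearMap.adjoint K) (K g) with hv
  -- convexity of the pre-cone
  have hS : Convex ℝ {y | ∃ z ∈ Θ, ∃ h : ℝ, 0 < h ∧ y = h • (z - x)} := by
    rintro y1 ⟨z1, hz1, h1, hh1, rfl⟩ y2 ⟨z2, hz2, h2, hh2, rfl⟩ a b ha hb hab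
    have hpos : 0 < a * h1 + b * h2 := by
      rcases eq_or_lt_of_le ha with ha' | ha'
      · nlinarith
      · nlinarith
    set h := a * h1 + b * h2 with hh
    refine ⟨(a * h1 / h) • z1 + (b * h2 / h) • z2, ?_, h, hpos, ?_⟩
    · exact hΘ hz1 hz2 (by positivity) (by positivity)
        (by field_simp; exact hh.symm)
    · have hne : h ≠ 0 := ne_of_gt hpos
      match_scalars <;> simp only [hh] <;> field_simp [show a * h1 + b * h2 ≠ 0 from hne, show b * h2 + a * h1 ≠ 0 by rw [add_comm]; exact hne] <;> try ring
  have hCconv : Convex ℝ (tanCone Θ x) := hS.closure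
  -- cone property
  have hcone : ∀ c : ℝ, 0 < c → ∀ y ∈ tanCone Θ x, c • y ∈ tanCone Θ x := by
    intro c hc y hy
    refine map_mem_closure (continuous_const_smul c) hy ?_
    rintro - ⟨z, hz, h, hh, rfl⟩
    exact ⟨z, hz, c * h, mul_pos hc hh, smul_smul c h _⟩
  -- θ - x is in the tangent cone
  have hw0 : θ - x ∈ tanCone Θ x :=
    subset_closure ⟨θ, hθ, 1, one_pos, (one_smul _ _).symm⟩
  -- variational inequalities
  have h1 : ⟪v - d, (θ - x) - d⟫ ≤ 0 := projVar hCconv hd hw0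
  have h2 : ⟪v - d, d⟫ ≤ 0 := by
    have := projVar hCconv hd (hcone 2 two_pos d hd.1)
    have heq : (2 : ℝ) • d - d = d := by
      rw [two_smul]; abel
    rwa [heq] at this
  have hkey : ⟪v - d, θ - x⟫ ≤ 0 := by
    rw [inner_sub_right] at h1; linarith
  have hθx : θ - x = -g := by rw [hg]; abel
  rw [hθx, inner_neg_right, inner_sub_left] at hkey
  -- ⟪v, g⟫ computation
  have hvg : ⟪v, g⟫ = -lam * ‖K g‖ ^ 2 := by
    rw [hv, real_inner_smul_left, ContinuousLinearMap.adjoint_inner_left,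
      real_inner_self_eq_norm_sq]
  have hdg : ⟪g, d⟫ ≤ -lam * ‖K g‖ ^ 2 := by
    rw [real_inner_comm]
    linarith
  refine ⟨?_, by linarith, ?_⟩
  · have hgd : HasDerivAt (fun s => θhat s - θ) d t := hder.sub_const θ
    have hinner := hgd.inner ℝ hgd
    have hD : HasDerivAt (fun s => ‖θhat s - θ‖ ^ 2)
        (⟪θhat t - θ, d⟫ + ⟪d, θhat t - θ⟫) t := by
      simpa only [real_inner_self_eq_norm_sq] using hinner
    have h2' : 2 * ⟪g, d⟫ = ⟪θhat t - θ, d⟫ + ⟪d, θhat t - θ⟫ := by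
      rw [hg, real_inner_comm d]; ring
    rw [h2']
    exact hD
  · have : 0 ≤ lam * ‖K g‖ ^ 2 := by positivity
    linarith
end

section
/- Let Θ ⊆ ℝⁿ be convex, θ ∈ Θ, and let θ̂ ∈ Θ satisfy θ̇̂ = [−λ_e Kᵀ e_obs]_{T_Θ(θ̂)}, where e_obs = K(θ̂ − θ) + e_f with ‖e_f‖ ≤ ε_f, λ_e ∈ {0, λ_θ} with λ_θ > 0, and ‖e_obs‖ > ε′_obs whenever λ_e = λ_θ, where ε′_obs > ε_f. Then d/dt ‖θ̂ − θ‖² ≤ −2 λ_e (e_obs − e_f)ᵀ e_obs ≤ 0, and if λ_e = λ_θ then d/dt ‖θ̂ − θ‖² ≤ −2 λ_θ (ε′_obs − ε_f) ε′_obs < 0. -/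
open scoped RealInnerProductSpace

lemma key_lemma {n : ℕ} (Θ : Set (EuclideanSpace ℝ (Fin n))) (hΘ : Convex ℝ Θ)
    (x θ : EuclideanSpace ℝ (Fin n)) (hθ : θ ∈ Θ)
    (v d : EuclideanSpace ℝ (Fin n)) (hd : IsProjOn (tanCone Θ x) v d) :
    0 ≤ ⟪d - v, θ - x⟫ := by
  obtain ⟨hdC, hmin⟩ := hd
  set w := θ - x with hw
  have hmem : ∀ s : ℝ, 0 < s → d + s • w ∈ tanCone Θ x := by
    intro s hs
    have hmaps : Set.MapsTo (fun y => y + s • w)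
        {y | ∃ z ∈ Θ, ∃ h : ℝ, 0 < h ∧ y = h • (z - x)}
        {y | ∃ z ∈ Θ, ∃ h : ℝ, 0 < h ∧ y = h • (z - x)} := by
      rintro y ⟨z, hz, h, hh, rfl⟩
      have hhs : (0:ℝ) < h + s := by linarith
      refine ⟨(h/(h+s)) • z + (s/(h+s)) • θ, ?_, h + s, hhs, ?_⟩
      · exact hΘ hz hθ (by positivity) (by positivity) (by field_simp)
      · rw [hw]
        match_scalars <;> (field_simp; try ring)
    have := map_mem_closure (f := fun y => y + s • w) (by continuity) hdC hmaps
    simpa [tanCone] using this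
  by_cases hw0 : w = 0
  · simp [hw0]
  have hN : (0:ℝ) < ‖w‖ ^ 2 := pow_pos (norm_pos_iff.mpr hw0) 2
  by_contra hcon
  push_neg at hcon
  have hc : ⟪d - v, w⟫ < 0 := hcon
  set c : ℝ := ⟪d - v, w⟫ with hcdef
  set s : ℝ := -c / ‖w‖^2 with hsdef
  have hs : (0:ℝ) < s := div_pos (by linarith) hN
  have h1 := hmin _ (hmem s hs)
  have h2 : ‖d + s • w - v‖ ^ 2 = ‖d - v‖^2 + 2 * (s * c) + s^2 * ‖w‖^2 := by
    have he : d + s • w - v = (d - v) + s • w := by abel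
    rw [he, norm_add_sq_real, real_inner_smul_right, ← hcdef, norm_smul]
    rw [Real.norm_eq_abs, mul_pow, sq_abs]
  have h3 : ‖d - v‖^2 ≤ ‖d + s • w - v‖^2 := by
    nlinarith [norm_nonneg (d + s • w - v), norm_nonneg (d - v)]
  rw [h2] at h3
  have hsN : s * ‖w‖^2 = -c := by rw [hsdef]; field_simp
  nlinarith [mul_pos hs (neg_pos.mpr hc)]

/-- With model mismatch bounded by `εf`, the squared estimation error still decreases
along the estimation dynamics, strictly whenever adaptation is on. -/
theorem stmt_10 {n m : ℕ}
    (Θ : Set (EuclideanSpace ℝ (Fin n))) (hΘ : Convex ℝ Θ)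
    (θ : EuclideanSpace ℝ (Fin n)) (hθ : θ ∈ Θ)
    (θhat : ℝ → EuclideanSpace ℝ (Fin n)) (hmem : ∀ s, θhat s ∈ Θ)
    (K : EuclideanSpace ℝ (Fin n) →L[ℝ] EuclideanSpace ℝ (Fin m))
    (ef eobs : EuclideanSpace ℝ (Fin m))
    (εf ε'obs lamθ lam t : ℝ)
    (heobs : eobs = K (θhat t - θ) + ef)
    (hef : ‖ef‖ ≤ εf)
    (hlamθ : 0 < lamθ) (hlam : lam = 0 ∨ lam = lamθ)
    (hobs : lam = lamθ → ε'obs < ‖eobs‖)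
    (hεf : εf < ε'obs)
    (d : EuclideanSpace ℝ (Fin n))
    (hd : IsProjOn (tanCone Θ (θhat t)) ((-lam) • (ContinuousLinearMap.adjoint K) eobs) d)
    (hder : HasDerivAt θhat d t) :
    HasDerivAt (fun s => ‖θhat s - θ‖ ^ 2) (2 * ⟪θhat t - θ, d⟫) t ∧
    2 * ⟪θhat t - θ, d⟫ ≤ -2 * lam * ⟪eobs - ef, eobs⟫ ∧
    -2 * lam * ⟪eobs - ef, eobs⟫ ≤ 0 ∧
    (lam = lamθ →
      2 * ⟪θhat t - θ, d⟫ ≤ -2 * lamθ * (ε'obs - εf) * ε'obs ∧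
      -2 * lamθ * (ε'obs - εf) * ε'obs < 0) := by
  set v := (-lam) • (ContinuousLinearMap.adjoint K) eobs with hv
  -- derivative
  have hsub : HasDerivAt (fun s => θhat s - θ) d t := hder.sub_const θ
  have hD : HasDerivAt (fun s => ‖θhat s - θ‖ ^ 2) (2 * ⟪θhat t - θ, d⟫) t := by
    have h0 := hsub.inner ℝ hsub
    simp only [real_inner_self_eq_norm_sq] at h0
    refine h0.congr_deriv ?_
    rw [real_inner_comm]; ring
  -- key projection inequality
  have hK : K (θhat t - θ) = eobs - ef := by rw [heobs]; abel
  have hkey := key_lemma Θ hΘ (θhat t) θ hθ v d hd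
  have hflip : ⟪d - v, θ - θhat t⟫ = ⟪v, θhat t - θ⟫ - ⟪d, θhat t - θ⟫ := by
    rw [inner_sub_left]
    have h1 : (θ - θhat t) = -(θhat t - θ) := by abel
    rw [h1, inner_neg_right, inner_neg_right]; ring
  have hvval : ⟪v, θhat t - θ⟫ = -lam * ⟪eobs - ef, eobs⟫ := by
    rw [hv, real_inner_smul_left, ContinuousLinearMap.adjoint_inner_left, hK,
      real_inner_comm]
  have hmain : 2 * ⟪θhat t - θ, d⟫ ≤ -2 * lam * ⟪eobs - ef, eobs⟫ := by
    have h2 : ⟪d, θhat t - θ⟫ ≤ -lam * ⟪eobs - ef, eobs⟫ := by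
      rw [← hvval]; linarith [hkey, hflip.symm ▸ hkey]
    rw [real_inner_comm]
    linarith
  -- inner product bounds
  have hI : ⟪eobs - ef, eobs⟫ = ‖eobs‖^2 - ⟪ef, eobs⟫ := by
    rw [inner_sub_left, real_inner_self_eq_norm_sq]
  have hcs : ⟪ef, eobs⟫ ≤ ‖ef‖ * ‖eobs‖ := real_inner_le_norm _ _
  have hefnn : (0:ℝ) ≤ ‖ef‖ := norm_nonneg _
  have heonn : (0:ℝ) ≤ ‖eobs‖ := norm_nonneg _
  have hIpos : lam = lamθ → (ε'obs - εf) * ε'obs ≤ ⟪eobs - ef, eobs⟫ := by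
    intro h
    have he := hobs h
    rw [hI]
    nlinarith [he, hεf, hef, hefnn]
  refine ⟨hD, hmain, ?_, fun h => ⟨?_, ?_⟩⟩
  · rcases hlam with rfl | h
    · simp
    · have hip := hIpos h
      have h1 : 0 ≤ (ε'obs - εf) * ε'obs := by nlinarith
      have h2 : 0 ≤ ⟪eobs - ef, eobs⟫ := le_trans h1 hip
      rw [h]
      nlinarith
  · have hip := hIpos h
    have h2 := mul_le_mul_of_nonneg_left hip hlamθ.le
    rw [h] at hmain
    linarith
  · have h1 : 0 < ε'obs := by linarith
    nlinarith [mul_pos (mul_pos hlamθ (sub_pos.mpr hεf)) h1]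
end

section
/- Suppose e_obs(s) = K(s)(θ̂_T − θ) + e_f(s) with ‖e_f(s)‖ ≤ ε_f for all s ∈ [T, T + τ₀], the PE condition ∫_T^{T+τ₀} K(s)ᵀK(s) ds ⪰ α₀ I holds, ‖e_obs(s)‖ < ε_obs on the interval, and ε_obs ≤ ε_θ √(α₀/τ₀) − ε_f with ε_θ > 2 ε_f √(τ₀/α₀). Then ‖θ̂_T − θ‖ < ε_θ. -/
open MeasureTheory

/-- Persistent excitation with bounded model mismatch: a small observation error on
`[T, T+τ₀]` still implies a small parameter estimation error. -/
theorem stmt_12 {m n : ℕ} (T τ₀ α₀ εf εθ εobs : ℝ)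
    (hτ : 0 < τ₀) (hα : 0 < α₀) (hεf : 0 < εf) (hεobs : 0 < εobs)
    (K : ℝ → EuclideanSpace ℝ (Fin n) →L[ℝ] EuclideanSpace ℝ (Fin m))
    (ef eobs : ℝ → EuclideanSpace ℝ (Fin m))
    (θT θ : EuclideanSpace ℝ (Fin n))
    (heq : ∀ s ∈ Set.Icc T (T + τ₀), eobs s = K s (θT - θ) + ef s)
    (hef : ∀ s ∈ Set.Icc T (T + τ₀), ‖ef s‖ ≤ εf)
    (hintK : IntervalIntegrable (fun s => ‖K s (θT - θ)‖ ^ 2) volume T (T + τ₀))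
    (hintf : IntervalIntegrable (fun s => ‖ef s‖ ^ 2) volume T (T + τ₀))
    (hPE : ∀ x : EuclideanSpace ℝ (Fin n),
      α₀ * ‖x‖ ^ 2 ≤ ∫ s in T..(T + τ₀), ‖K s x‖ ^ 2)
    (hbnd : ∀ s ∈ Set.Icc T (T + τ₀), ‖eobs s‖ < εobs)
    (hεθ : 2 * εf * Real.sqrt (τ₀ / α₀) < εθ)
    (hε : εobs ≤ εθ * Real.sqrt (α₀ / τ₀) - εf) :
    ‖θT - θ‖ < εθ := by
  set c : ℝ := εθ * Real.sqrt (α₀ / τ₀) with hc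
  have hεθpos : 0 < εθ := lt_trans (by positivity) hεθ
  have hcpos : 0 < c := by
    have : 0 < Real.sqrt (α₀ / τ₀) := Real.sqrt_pos.2 (by positivity)
    positivity
  -- pointwise bound: ‖K s (θT-θ)‖ < c on Icc
  have hpt : ∀ s ∈ Set.Icc T (T + τ₀), ‖K s (θT - θ)‖ ^ 2 < c ^ 2 := by
    intro s hs
    have h1 : ‖K s (θT - θ)‖ ≤ ‖eobs s‖ + ‖ef s‖ := by
      have : K s (θT - θ) = eobs s - ef s := by rw [heq s hs]; abel
      rw [this]; exact norm_sub_le _ _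
    have h2 : ‖K s (θT - θ)‖ < εobs + εf :=
      h1.trans_lt (add_lt_add_of_lt_of_le (hbnd s hs) (hef s hs))
    have h3 : εobs + εf ≤ c := by linarith
    have h4 : ‖K s (θT - θ)‖ < c := h2.trans_le h3
    exact pow_lt_pow_left₀ h4 (norm_nonneg _) (by norm_num)
  have hTlt : T < T + τ₀ := by linarith
  -- strict integral inequality
  have hlt : (∫ s in T..(T + τ₀), ‖K s (θT - θ)‖ ^ 2) <
      ∫ _s in T..(T + τ₀), c ^ 2 := by
    apply intervalIntegral.integral_lt_integral_of_ae_le_of_measure_setOf_lt_ne_zero hTlt.le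
      hintK (intervalIntegrable_const)
    · filter_upwards [ae_restrict_mem measurableSet_Ioc] with s hs
      exact (hpt s (Set.Ioc_subset_Icc_self hs)).le
    · intro h0
      have : (volume.restrict (Set.Ioc T (T + τ₀))) (Set.Ioc T (T + τ₀)) = 0 := by
        refine measure_mono_null ?_ h0
        intro s hs
        exact hpt s (Set.Ioc_subset_Icc_self hs)
      rw [Measure.restrict_apply_self] at this
      simp [Real.volume_Ioc] at this
      linarith
  have hconst : (∫ _s in T..(T + τ₀), c ^ 2) = τ₀ * c ^ 2 := by
    simp [mul_comm]
  have hc2 : τ₀ * c ^ 2 = α₀ * εθ ^ 2 := by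
    rw [hc, mul_pow, Real.sq_sqrt (by positivity : (0:ℝ) ≤ α₀ / τ₀)]
    field_simp
  have hfinal : α₀ * ‖θT - θ‖ ^ 2 < α₀ * εθ ^ 2 := by
    calc α₀ * ‖θT - θ‖ ^ 2 ≤ _ := hPE (θT - θ)
      _ < ∫ _s in T..(T + τ₀), c ^ 2 := hlt
      _ = α₀ * εθ ^ 2 := by rw [hconst, hc2]
  have hsq : ‖θT - θ‖ ^ 2 < εθ ^ 2 := lt_of_mul_lt_mul_left hfinal hα.le
  nlinarith [norm_nonneg (θT - θ)]
end

section
/- Let S ⊆ ℝⁿ be a compact convex set and g: S → ℝⁿ continuous. Define G(z) := {g(z) − w : w ∈ N_S(z)} ∩ B(g(z), ‖g(z) − [g(z)]_{T_S(z)}‖), the intersection of the translate of the negative normal cone with the closed ball centered at g(z) of radius equal to the distance from g(z) to the tangent cone. Then for every z ∈ S and every w ∈ G(z), we have g(z)ᵀ w ≥ ‖[g(z)]_{T_S(z)}‖². -/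
open scoped RealInnerProductSpace

lemma tanCone_convex {n : ℕ} (S : Set (EuclideanSpace ℝ (Fin n))) (hconv : Convex ℝ S)
    (x : EuclideanSpace ℝ (Fin n)) : Convex ℝ (tanCone S x) := by
  apply Convex.closure
  rintro y1 ⟨z1, hz1, h1, h1pos, rfl⟩ y2 ⟨z2, hz2, h2, h2pos, rfl⟩ a b ha hb hab
  rcases eq_or_lt_of_le ha with rfl | ha'
  · simp only [zero_add] at hab; subst hab; simpa using ⟨z2, hz2, h2, h2pos, by simp⟩
  rcases eq_or_lt_of_le hb with rfl | hb'
  · simp only [add_zero] at hab; subst hab; simpa using ⟨z1, hz1, h1, h1pos, by simp⟩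
  set c := a * h1 + b * h2 with hc
  have hcpos : 0 < c := by positivity
  refine ⟨(a * h1 / c) • z1 + (b * h2 / c) • z2, hconv hz1 hz2 (by positivity) (by positivity)
    (by field_simp; exact hc.symm), c, hcpos, ?_⟩
  have h1' : c * (a * h1 / c) = a * h1 := by field_simp
  have h2' : c * (b * h2 / c) = b * h2 := by field_simp
  simp only [smul_sub, smul_smul, smul_add]
  rw [h1', h2', hc]
  module

/-- For the set-valued extension `G z` of the projected vector field, every element
`w` of `G z` satisfies `inner (g z) w ≥ ‖p‖ ^ 2`, where `p` projects `g z` onto the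
tangent cone. -/
theorem stmt_13 {n : ℕ} (S : Set (EuclideanSpace ℝ (Fin n)))
    (hS : IsCompact S) (hconv : Convex ℝ S)
    (g : EuclideanSpace ℝ (Fin n) → EuclideanSpace ℝ (Fin n)) (hg : ContinuousOn g S)
    (z : EuclideanSpace ℝ (Fin n)) (hz : z ∈ S)
    (p : EuclideanSpace ℝ (Fin n)) (hp : IsProjOn (tanCone S z) (g z) p)
    (w : EuclideanSpace ℝ (Fin n))
    (hw₁ : ∃ u ∈ normalCone S z, w = g z - u)
    (hw₂ : ‖w - g z‖ ≤ ‖g z - p‖) :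
    ‖p‖ ^ 2 ≤ ⟪g z, w⟫ := by
  obtain ⟨u, hu, rfl⟩ := hw₁
  set v := g z with hv
  obtain ⟨hpC, hpmin⟩ := hp
  -- variational characterization
  have hKconv := tanCone_convex S hconv z
  haveI : Nonempty ↑(tanCone S z) := ⟨⟨p, hpC⟩⟩
  have hinf : ‖v - p‖ = ⨅ w : tanCone S z, ‖v - w‖ := by
    apply le_antisymm
    · apply le_ciInf
      rintro ⟨y, hy⟩
      simpa [norm_sub_rev] using hpmin y hy
    · exact ciInf_le ⟨0, by rintro r ⟨y, rfl⟩; positivity⟩ (⟨p, hpC⟩ : tanCone S z)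
  have hchar := (norm_eq_iInf_iff_real_inner_le_zero hKconv hpC).mp hinf
  -- 0 ∈ tanCone and 2p ∈ tanCone
  have h0 : (0 : EuclideanSpace ℝ (Fin n)) ∈ tanCone S z :=
    subset_closure ⟨z, hz, 1, one_pos, by simp⟩
  have h2p : (2 : ℝ) • p ∈ tanCone S z := by
    have hmap : Set.MapsTo (fun y : EuclideanSpace ℝ (Fin n) => (2:ℝ) • y)
        {y | ∃ z' ∈ S, ∃ h : ℝ, 0 < h ∧ y = h • (z' - z)}
        {y | ∃ z' ∈ S, ∃ h : ℝ, 0 < h ∧ y = h • (z' - z)} := by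
      rintro y ⟨z', hz', h, hpos, rfl⟩
      refine ⟨z', hz', 2 * h, by positivity, ?_⟩
      show (2:ℝ) • h • (z' - z) = (2 * h) • (z' - z)
      rw [smul_smul]
    exact hmap.closure (continuous_const_smul (2:ℝ)) hpC
  -- inner product facts
  have e1 : ⟪v - p, (2:ℝ) • p - p⟫ ≤ 0 := hchar _ h2p
  have e2 : ⟪v - p, (0:EuclideanSpace ℝ (Fin n)) - p⟫ ≤ 0 := hchar _ h0
  have e3 : ⟪v - p, p⟫ = 0 := by
    have : ((2:ℝ) • p - p) = p := by module
    rw [this] at e1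
    have : ((0:EuclideanSpace ℝ (Fin n)) - p) = -p := by module
    rw [this, inner_neg_right] at e2
    linarith
  have e4 : ⟪u, p⟫ ≤ 0 := hu p hpC
  have e5 : ⟪v - p, u⟫ ≤ ‖v - p‖ * ‖u‖ := real_inner_le_norm _ _
  have e6 : ‖u‖ ≤ ‖v - p‖ := by
    have : v - u - v = -u := by module
    rwa [this, norm_neg] at hw₂
  have e7 : ‖v - p‖ ^ 2 = ⟪v - p, v - p⟫ := (real_inner_self_eq_norm_sq _).symm
  have e8 : ‖p‖ ^ 2 = ⟪p, p⟫ := (real_inner_self_eq_norm_sq _).symm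
  have hnn : (0:ℝ) ≤ ‖v - p‖ := norm_nonneg _
  have expand : ⟪v, v - u⟫ = ⟪v - p, v - p⟫ + ⟪p, p⟫ + 2 * ⟪v - p, p⟫ - ⟪v - p, u⟫ - ⟪p, u⟫ := by
    simp only [inner_sub_left, inner_sub_right]
    rw [real_inner_comm p v]
    ring
  have e9 : ⟪p, u⟫ = ⟪u, p⟫ := real_inner_comm _ _
  nlinarith [sq_nonneg (‖v - p‖ - ‖u‖)]
end

section
/- Let S ⊆ ℝⁿ be a compact convex set and g: S → ℝⁿ continuous. Then for every z ∈ S and every w ∈ G(z) (with G as defined via the normal cone and ball intersection), ‖w‖ ≥ ‖[g(z)]_{T_S(z)}‖, i.e., the projected vector field realizes the minimum norm among all elements of G(z). -/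
open scoped RealInnerProductSpace

lemma smul_mem_tanCone {n : ℕ} {S : Set (EuclideanSpace ℝ (Fin n))}
    {x y : EuclideanSpace ℝ (Fin n)} {t : ℝ} (ht : 0 < t) (hy : y ∈ tanCone S x) :
    t • y ∈ tanCone S x := by
  have hM : (fun v => t • v) '' {y | ∃ z ∈ S, ∃ h : ℝ, 0 < h ∧ y = h • (z - x)} ⊆
      {y | ∃ z ∈ S, ∃ h : ℝ, 0 < h ∧ y = h • (z - x)} := by
    rintro v ⟨y, ⟨z, hz, h, hpos, rfl⟩, rfl⟩
    exact ⟨z, hz, t * h, mul_pos ht hpos, by simp [smul_smul]⟩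
  have h1 : t • y ∈ (fun v => t • v) '' tanCone S x := ⟨y, hy, rfl⟩
  have h2 := image_closure_subset_closure_image (f := fun v : EuclideanSpace ℝ (Fin n) => t • v)
    (s := {y | ∃ z ∈ S, ∃ h : ℝ, 0 < h ∧ y = h • (z - x)}) (continuous_const_smul t)
  exact closure_mono hM (h2 h1)

/-- The projected vector field has minimum norm among all elements of `G z`. -/
theorem stmt_14 {n : ℕ} (S : Set (EuclideanSpace ℝ (Fin n)))
    (hS : IsCompact S) (hconv : Convex ℝ S)
    (g : EuclideanSpace ℝ (Fin n) → EuclideanSpace ℝ (Fin n)) (hg : ContinuousOn g S)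
    (z : EuclideanSpace ℝ (Fin n)) (hz : z ∈ S)
    (p : EuclideanSpace ℝ (Fin n)) (hp : IsProjOn (tanCone S z) (g z) p)
    (w : EuclideanSpace ℝ (Fin n))
    (hw₁ : ∃ u ∈ normalCone S z, w = g z - u)
    (hw₂ : ‖w - g z‖ ≤ ‖g z - p‖) :
    ‖p‖ ≤ ‖w‖ := by
  obtain ⟨u, hu, rfl⟩ := hw₁
  obtain ⟨hpC, hpmin⟩ := hp
  set v := g z with hv
  -- key: ⟪p, v⟫ ≥ ‖p‖²
  have hkey : ‖p‖ ^ 2 ≤ ⟪p, v⟫ := by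
    rcases eq_or_ne p 0 with rfl | hp0
    · simp
    have hP : (0 : ℝ) < ‖p‖ ^ 2 := by
      have := norm_pos_iff.mpr hp0
      positivity
    -- for any 0 < ε < 1 : (2 - ε) ‖p‖² ≤ 2 ⟪p, v⟫
    have hstep : ∀ ε : ℝ, 0 < ε → ε < 1 → (2 - ε) * ‖p‖ ^ 2 ≤ 2 * ⟪p, v⟫ := by
      intro ε hε hε1
      have hmem : (1 - ε) • p ∈ tanCone S z := smul_mem_tanCone (by linarith) hpC
      have h := hpmin _ hmem
      have h2 : ‖p - v‖ ^ 2 ≤ ‖(1 - ε) • p - v‖ ^ 2 := by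
        have := norm_nonneg (p - v)
        nlinarith
      have e1 : ‖p - v‖ ^ 2 = ‖p‖ ^ 2 - 2 * ⟪p, v⟫ + ‖v‖ ^ 2 := by
        rw [norm_sub_sq_real]
      have e2 : ‖(1 - ε) • p - v‖ ^ 2
          = (1 - ε) ^ 2 * ‖p‖ ^ 2 - 2 * ((1 - ε) * ⟪p, v⟫) + ‖v‖ ^ 2 := by
        rw [norm_sub_sq_real, norm_smul, real_inner_smul_left]
        simp [abs_of_pos (show (0:ℝ) < 1 - ε by linarith)]
        ring
      rw [e1, e2] at h2
      nlinarith
    by_contra hcon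
    push_neg at hcon
    set δ : ℝ := ‖p‖ ^ 2 - ⟪p, v⟫ with hδ
    have hδpos : 0 < δ := by simpa [hδ] using sub_pos.mpr hcon
    have hεpos : 0 < min (1/2) (δ / ‖p‖ ^ 2) := by positivity
    have hε1 : min (1/2) (δ / ‖p‖ ^ 2) < 1 := lt_of_le_of_lt (min_le_left _ _) (by norm_num)
    have := hstep _ hεpos hε1
    have hle : min (1/2) (δ / ‖p‖ ^ 2) ≤ δ / ‖p‖ ^ 2 := min_le_right _ _
    have : (2 - δ / ‖p‖ ^ 2) * ‖p‖ ^ 2 ≤ 2 * ⟪p, v⟫ := by nlinarith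
    have hdd : (δ / ‖p‖ ^ 2) * ‖p‖ ^ 2 = δ := div_mul_cancel₀ _ (ne_of_gt hP)
    nlinarith
  have hup : ⟪u, p⟫ ≤ 0 := hu p hpC
  -- ‖w‖² ≥ ‖p‖²
  have hsq : ‖p‖ ^ 2 ≤ ‖v - u‖ ^ 2 := by
    have e : v - u = (v - u - p) + p := by abel
    have := norm_add_sq_real (v - u - p) p
    rw [← e] at this
    have e2 : ⟪v - u - p, p⟫ = ⟪v, p⟫ - ⟪u, p⟫ - ⟪p, p⟫ := by
      rw [inner_sub_left, inner_sub_left]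
    have e3 : ⟪p, p⟫ = ‖p‖ ^ 2 := real_inner_self_eq_norm_sq p
    have e4 : ⟪v, p⟫ = ⟪p, v⟫ := real_inner_comm p v
    nlinarith [sq_nonneg ‖v - u - p‖]
  nlinarith [norm_nonneg p, norm_nonneg (v - u)]
end

section
/- Let S ⊆ ℝⁿ be compact and convex and g: S → ℝⁿ continuous. Then the map z ↦ ‖g(z) − [g(z)]_{T_S(z)}‖ (the distance from g(z) to the tangent cone T_S(z)) is upper semicontinuous on S. -/
open scoped RealInnerProductSpace

/-- The distance from `g z` to the tangent cone at `z` is upper semicontinuous on `S`. -/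
theorem stmt_15 {n : ℕ} (S : Set (EuclideanSpace ℝ (Fin n)))
    (hS : IsCompact S) (hconv : Convex ℝ S)
    (g : EuclideanSpace ℝ (Fin n) → EuclideanSpace ℝ (Fin n)) (hg : ContinuousOn g S) :
    UpperSemicontinuousOn (fun z => Metric.infDist (g z) (tanCone S z)) S := by
  intro x hx y hy
  have hne : {v : EuclideanSpace ℝ (Fin n) |
      ∃ z ∈ S, ∃ h : ℝ, 0 < h ∧ v = h • (z - x)}.Nonempty :=
    ⟨0, x, hx, 1, one_pos, by simp⟩
  rw [show (fun z => Metric.infDist (g z) (tanCone S z)) x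
        = Metric.infDist (g x) (tanCone S x) from rfl,
      tanCone, Metric.infDist_closure, Metric.infDist_lt_iff hne] at hy
  obtain ⟨v, ⟨w, hw, h, hh, rfl⟩, hd⟩ := hy
  have hcont : ContinuousWithinAt (fun z => dist (g z) (h • (w - z))) S x :=
    (hg x hx).dist (Continuous.continuousWithinAt ((continuous_const.sub continuous_id).const_smul h))
  have hev : ∀ᶠ z in nhdsWithin x S, dist (g z) (h • (w - z)) < y :=
    hcont (Iio_mem_nhds hd)
  filter_upwards [hev] with z hz
  have hmem : h • (w - z) ∈ tanCone S z :=
    subset_closure ⟨w, hw, h, hh, rfl⟩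
  calc Metric.infDist (g z) (tanCone S z) ≤ dist (g z) (h • (w - z)) :=
        Metric.infDist_le_dist_of_mem hmem
    _ < y := hz
end
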